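/- (Lemma 2) For fixed A and Z, the total antisymmetrization over B₁,...,B_J of the (J+2)-bracket [A B₁ ⋯ B_J Z] equals J! times the antisymmetrization over the B's of Σ_{j=0}^{J} (−1)^j Σ_{k=0}^{J−j} (−1)^k [ B₁⋯B_k A B_{k+1}⋯B_{J−j} Z B_{J−j+1}⋯B_J − B₁⋯B_k Z B_{k+1}⋯B_{J−j} A B_{J−j+1}⋯B_J ]. -/

import Mathlib

set_option maxHeartbeats 1000000

/-- The Nambu `n`-bracket: signed sum over all permutations of the ordered product. -/
def nambu {R : Type*} [Ring R] {n : ℕ} (f : Fin n → R) : R :=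
  ∑ σ : Equiv.Perm (Fin n), (Equiv.Perm.sign σ : ℤ) • (List.ofFn (f ∘ σ)).prod

section NambuAux

open Equiv Finset List

variable {R : Type*} [Ring R]

/-- `A` inserted at position `k`, sign `(-1)^k`. -/
def nambuV {R : Type*} [Ring R] {n : ℕ} (A : R) (C : Fin n → R) : R :=
  ∑ k ∈ Finset.range (n + 1),
    (-1 : ℤ) ^ k • (((ofFn C).take k).prod * A * ((ofFn C).drop k).prod)

/-- `Z` inserted at position `n - j`, sign `(-1)^j`. -/
def nambuU {R : Type*} [Ring R] {n : ℕ} (Z : R) (C : Fin n → R) : R :=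
  ∑ j ∈ Finset.range (n + 1),
    (-1 : ℤ) ^ j • (((ofFn C).take (n - j)).prod * Z * ((ofFn C).drop (n - j)).prod)

/-- Both `A` and `Z` inserted, as in the statement of Lemma 2. -/
def nambuT {R : Type*} [Ring R] {n : ℕ} (A Z : R) (C : Fin n → R) : R :=
  ∑ j ∈ Finset.range (n + 1), ∑ k ∈ Finset.range (n - j + 1),
    ((-1 : ℤ) ^ (j + k)) •
      ((((List.ofFn C).take k).prod * A * (((List.ofFn C).take (n - j)).drop k).prod * Z *
          ((List.ofFn C).drop (n - j)).prod) -
       (((List.ofFn C).take k).prod * Z * (((List.ofFn C).take (n - j)).drop k).prod * A *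
          ((List.ofFn C).drop (n - j)).prod))

lemma sum_perm_zero (g : Perm (Fin 0) → R) : (∑ τ : Perm (Fin 0), g τ) = g 1 := by
  refine Finset.sum_eq_single_of_mem 1 (Finset.mem_univ 1) fun b _ hb => ?_
  exact absurd (Subsingleton.elim b 1) hb

lemma sum_perm_one (g : Perm (Fin 1) → R) : (∑ τ : Perm (Fin 1), g τ) = g 1 := by
  refine Finset.sum_eq_single_of_mem 1 (Finset.mem_univ 1) fun b _ hb => ?_
  exact absurd (Subsingleton.elim b 1) hb

lemma nambu_one (f : Fin 1 → R) : nambu f = f 0 := by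
  rw [nambu, sum_perm_one]
  simp

/-- Decomposition of a signed sum over `Perm (Fin (n+1))` according to the image of `0`. -/
lemma expand_first {n : ℕ} (B : Fin (n + 1) → R) (F : (Fin n → R) → R) :
    ∑ σ : Perm (Fin (n + 1)), (Perm.sign σ : ℤ) • (B (σ 0) * F (B ∘ σ ∘ Fin.succ)) =
      ∑ p : Fin (n + 1), (-1 : ℤ) ^ (p : ℕ) •
        (B p * ∑ e : Perm (Fin n), (Perm.sign e : ℤ) • F (B ∘ p.succAbove ∘ e)) := by
  rw [← (Equiv.Perm.decomposeFin (n := n)).symm.sum_comp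
    (fun σ => (Perm.sign σ : ℤ) • (B (σ 0) * F (B ∘ σ ∘ Fin.succ)))]
  rw [Fintype.sum_prod_type]
  refine Finset.sum_congr rfl fun p _ => ?_
  induction p using Fin.cases with
  | zero =>
      simp only [Fin.val_zero, pow_zero, one_smul, Finset.mul_sum, mul_smul_comm]
      refine Finset.sum_congr rfl fun e _ => ?_
      rw [Equiv.Perm.decomposeFin.symm_sign, if_pos rfl, one_mul,
        Equiv.Perm.decomposeFin_symm_apply_zero]
      have harg : B ∘ ⇑(Perm.decomposeFin.symm (0, e)) ∘ Fin.succ = B ∘ Fin.succAbove 0 ∘ ⇑e := by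
        funext i
        simp [Equiv.Perm.decomposeFin_symm_apply_succ]
      rw [harg]
  | succ j =>
      rw [← Equiv.sum_comp (Equiv.mulLeft (Fin.cycleRange j))
        (fun e => (Perm.sign e : ℤ) • F (B ∘ (j.succ).succAbove ∘ ⇑e))]
      simp only [Equiv.coe_mulLeft, Finset.mul_sum, Finset.smul_sum, mul_smul_comm, smul_smul]
      refine Finset.sum_congr rfl fun e _ => ?_
      have hc : B ∘ ⇑(Equiv.Perm.decomposeFin.symm (j.succ, e)) ∘ Fin.succ
          = B ∘ (j.succ).succAbove ∘ ⇑(Fin.cycleRange j * e) := by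
        funext i
        simp only [Function.comp_apply, Equiv.Perm.decomposeFin_symm_apply_succ,
          Perm.mul_apply, ← Fin.succAbove_cycleRange]
      rw [hc, Equiv.Perm.decomposeFin.symm_sign, if_neg (Fin.succ_ne_zero j),
        Equiv.Perm.decomposeFin_symm_apply_zero]
      congr 1
      simp only [Equiv.Perm.sign_mul, Fin.sign_cycleRange, Fin.val_succ, Units.val_mul,
        Units.val_neg, Units.val_one, Units.val_pow_eq_pow_val]
      have h2 : ((-1 : ℤ)) ^ (j : ℕ) * ((-1 : ℤ)) ^ (j : ℕ) = 1 := by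
        rw [← pow_add, ← two_mul, pow_mul]; norm_num
      linear_combination ((Perm.sign e : ℤ)) * h2

/-- Expansion of the Nambu bracket along the first slot. -/
lemma nambu_succ {n : ℕ} (f : Fin (n + 1) → R) :
    nambu f = ∑ p : Fin (n + 1), (-1 : ℤ) ^ (p : ℕ) • (f p * nambu (f ∘ p.succAbove)) := by
  calc nambu f
      = ∑ σ : Perm (Fin (n + 1)), (Perm.sign σ : ℤ) •
          (f (σ 0) * (fun D : Fin n → R => (List.ofFn D).prod) (f ∘ ⇑σ ∘ Fin.succ)) := by
        rw [nambu]
        refine Finset.sum_congr rfl fun σ _ => ?_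
        congr 1
        rw [List.ofFn_succ, List.prod_cons]
        rfl
    _ = ∑ p : Fin (n + 1), (-1 : ℤ) ^ (p : ℕ) • (f p * ∑ e : Perm (Fin n),
          (Perm.sign e : ℤ) • (fun D : Fin n → R => (List.ofFn D).prod) (f ∘ p.succAbove ∘ e)) :=
        expand_first f (fun D : Fin n → R => (List.ofFn D).prod)
    _ = ∑ p : Fin (n + 1), (-1 : ℤ) ^ (p : ℕ) • (f p * nambu (f ∘ p.succAbove)) := by
        refine Finset.sum_congr rfl fun p _ => ?_
        rw [nambu]
        exact congrArg (fun x => (-1 : ℤ) ^ (p : ℕ) • (f p * x))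
          (Finset.sum_congr rfl fun e _ => rfl)

lemma ofFn_eq_cons {n : ℕ} (C : Fin (n + 1) → R) :
    List.ofFn C = C 0 :: List.ofFn (C ∘ Fin.succ) := by
  rw [List.ofFn_succ]; rfl

lemma neg_one_pow_sub (N j : ℕ) (h : j ≤ N) :
    (-1 : ℤ) ^ (N - j) = (-1) ^ N * (-1) ^ j := by
  have : (N - j) + 2 * j = N + j := by omega
  have h2 : ((-1 : ℤ) ^ (N - j)) * ((-1) ^ (2 * j)) = (-1) ^ (N + j) := by
    rw [← pow_add, this]
  simpa [pow_mul, pow_add] using h2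

lemma nambuV_succ {n : ℕ} (A : R) (C : Fin (n + 1) → R) :
    nambuV A C = A * (ofFn C).prod - C 0 * nambuV A (C ∘ Fin.succ) := by
  rw [nambuV, Finset.sum_range_succ', nambuV, Finset.mul_sum, ofFn_eq_cons]
  simp only [List.take_succ_cons, List.drop_succ_cons, List.prod_cons, List.take_zero,
    List.prod_nil, List.drop_zero, pow_zero, one_smul, one_mul]
  rw [sub_eq_add_neg, ← Finset.sum_neg_distrib, add_comm (A * _)]
  congr 1
  refine Finset.sum_congr rfl fun k _ => ?_
  rw [pow_succ, mul_smul, neg_one_zsmul, smul_neg, mul_smul_comm]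
  simp [mul_assoc]

lemma nambuU_succ {n : ℕ} (Z : R) (C : Fin (n + 1) → R) :
    nambuU Z C = (-1 : ℤ) ^ (n + 1) • (Z * (ofFn C).prod) + C 0 * nambuU Z (C ∘ Fin.succ) := by
  rw [nambuU, Finset.sum_range_succ, nambuU, Finset.mul_sum, ofFn_eq_cons]
  simp only [Nat.sub_self, List.take_zero, List.prod_nil, one_mul, List.drop_zero,
    List.prod_cons]
  rw [add_comm]
  congr 1
  refine Finset.sum_congr rfl fun j hj => ?_
  have hj' : j ≤ n := Nat.lt_succ_iff.mp (Finset.mem_range.mp hj)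
  have h1 : n + 1 - j = (n - j) + 1 := by omega
  rw [h1, List.take_succ_cons, List.drop_succ_cons, List.prod_cons, mul_smul_comm]
  simp [mul_assoc]

lemma nambuT_succ {n : ℕ} (A Z : R) (C : Fin (n + 1) → R) :
    nambuT A Z C = A * nambuU Z C - (-1 : ℤ) ^ (n + 1) • (Z * nambuV A C)
      - C 0 * nambuT A Z (C ∘ Fin.succ) := by
  have hsplit : nambuT A Z C =
      (∑ j ∈ Finset.range (n + 2), (-1 : ℤ) ^ j •
        ((A * (((ofFn C).take (n + 1 - j)).prod * Z * ((ofFn C).drop (n + 1 - j)).prod)) -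
         (Z * (((ofFn C).take (n + 1 - j)).prod * A * ((ofFn C).drop (n + 1 - j)).prod))))
      + ∑ j ∈ Finset.range (n + 1), ∑ k ∈ Finset.range (n + 1 - j),
          ((-1 : ℤ) ^ (j + (k + 1))) •
      ((((List.ofFn C).take (k + 1)).prod * A * (((List.ofFn C).take (n + 1 - j)).drop (k + 1)).prod * Z *
          ((List.ofFn C).drop (n + 1 - j)).prod) -
       (((List.ofFn C).take (k + 1)).prod * Z * (((List.ofFn C).take (n + 1 - j)).drop (k + 1)).prod * A *
          ((List.ofFn C).drop (n + 1 - j)).prod)) := by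
    rw [nambuT]
    have hj : ∀ j ∈ Finset.range (n + 2),
        (∑ k ∈ Finset.range (n + 1 - j + 1), ((-1 : ℤ) ^ (j + k)) •
          ((((List.ofFn C).take k).prod * A * (((List.ofFn C).take (n + 1 - j)).drop k).prod * Z *
              ((List.ofFn C).drop (n + 1 - j)).prod) -
           (((List.ofFn C).take k).prod * Z * (((List.ofFn C).take (n + 1 - j)).drop k).prod * A *
              ((List.ofFn C).drop (n + 1 - j)).prod)))
        = ((-1 : ℤ) ^ j •
            ((A * (((ofFn C).take (n + 1 - j)).prod * Z * ((ofFn C).drop (n + 1 - j)).prod)) -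
             (Z * (((ofFn C).take (n + 1 - j)).prod * A * ((ofFn C).drop (n + 1 - j)).prod))))
          + ∑ k ∈ Finset.range (n + 1 - j),
            ((-1 : ℤ) ^ (j + (k + 1))) •
      ((((List.ofFn C).take (k + 1)).prod * A * (((List.ofFn C).take (n + 1 - j)).drop (k + 1)).prod * Z *
          ((List.ofFn C).drop (n + 1 - j)).prod) -
       (((List.ofFn C).take (k + 1)).prod * Z * (((List.ofFn C).take (n + 1 - j)).drop (k + 1)).prod * A *
          ((List.ofFn C).drop (n + 1 - j)).prod)) := by
      intro j _
      rw [Finset.sum_range_succ']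
      rw [add_comm]
      congr 1
      simp [mul_assoc]
    rw [Finset.sum_congr rfl hj, Finset.sum_add_distrib]
    congr 1
    rw [Finset.sum_range_succ]
    simp
  have h0 : (∑ j ∈ Finset.range (n + 2), (-1 : ℤ) ^ j •
        ((A * (((ofFn C).take (n + 1 - j)).prod * Z * ((ofFn C).drop (n + 1 - j)).prod)) -
         (Z * (((ofFn C).take (n + 1 - j)).prod * A * ((ofFn C).drop (n + 1 - j)).prod))))
      = A * nambuU Z C - (-1 : ℤ) ^ (n + 1) • (Z * nambuV A C) := by
    simp only [smul_sub]
    rw [Finset.sum_sub_distrib]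
    congr 1
    · rw [nambuU, Finset.mul_sum]
      exact Finset.sum_congr rfl fun j _ => (mul_smul_comm _ _ _).symm
    · rw [← Finset.sum_range_reflect]
      have hper : ∀ j ∈ Finset.range (n + 2),
          (-1 : ℤ) ^ (n + 2 - 1 - j) •
            (Z * (((ofFn C).take (n + 1 - (n + 2 - 1 - j))).prod * A *
              ((ofFn C).drop (n + 1 - (n + 2 - 1 - j))).prod))
          = (-1 : ℤ) ^ (n + 1) • ((-1 : ℤ) ^ j •
              (Z * (((ofFn C).take j).prod * A * ((ofFn C).drop j).prod))) := by
        intro j hj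
        have hj' : j ≤ n + 1 := Nat.lt_succ_iff.mp (Finset.mem_range.mp hj)
        have e1 : n + 2 - 1 - j = n + 1 - j := by omega
        have e2 : n + 1 - (n + 1 - j) = j := by omega
        rw [e1, e2, neg_one_pow_sub _ _ hj', mul_smul]
      rw [Finset.sum_congr rfl hper, ← Finset.smul_sum]
      congr 1
      rw [nambuV, Finset.mul_sum]
      exact Finset.sum_congr rfl fun j _ => (mul_smul_comm _ _ _).symm
  have hrec : (∑ j ∈ Finset.range (n + 1), ∑ k ∈ Finset.range (n + 1 - j),
          ((-1 : ℤ) ^ (j + (k + 1))) •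
      ((((List.ofFn C).take (k + 1)).prod * A * (((List.ofFn C).take (n + 1 - j)).drop (k + 1)).prod * Z *
          ((List.ofFn C).drop (n + 1 - j)).prod) -
       (((List.ofFn C).take (k + 1)).prod * Z * (((List.ofFn C).take (n + 1 - j)).drop (k + 1)).prod * A *
          ((List.ofFn C).drop (n + 1 - j)).prod)))
      = -(C 0 * nambuT A Z (C ∘ Fin.succ)) := by
    rw [nambuT, Finset.mul_sum, ← Finset.sum_neg_distrib]
    refine Finset.sum_congr rfl fun j hj => ?_
    have hj' : j ≤ n := Nat.lt_succ_iff.mp (Finset.mem_range.mp hj)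
    rw [Finset.mul_sum, ← Finset.sum_neg_distrib]
    have hr : n + 1 - j = (n - j) + 1 := by omega
    rw [hr]
    refine Finset.sum_congr rfl fun k _ => ?_
    rw [ofFn_eq_cons C, List.take_succ_cons, List.take_succ_cons, List.drop_succ_cons,
      List.drop_succ_cons, List.prod_cons,
      ← Nat.add_assoc, pow_succ, mul_smul, neg_one_zsmul, smul_neg, mul_smul_comm]
    congr 2
    simp [mul_sub, mul_assoc]
  rw [hsplit, h0, hrec]
  abel

lemma nambu_cons_eq : ∀ {n : ℕ} (A : R) (C : Fin n → R),
    nambu (Fin.cons A C) = ∑ τ : Perm (Fin n), (Perm.sign τ : ℤ) • nambuV A (C ∘ τ) := by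
  intro n
  induction n with
  | zero =>
    intro A C
    rw [sum_perm_zero (fun τ : Perm (Fin 0) => (Perm.sign τ : ℤ) • nambuV A (C ∘ τ)), nambu_one]
    simp [nambuV]
  | succ m ih =>
    intro A C
    have e1 : (Fin.cons A C) ∘ Fin.succ = C := funext fun i => by simp
    have e2 : ∀ i : Fin (m + 1),
        (Fin.cons A C) ∘ (i.succ).succAbove = Fin.cons A (C ∘ i.succAbove) := by
      intro i; funext j
      induction j using Fin.cases with
      | zero => simp
      | succ l => simp [Fin.succ_succAbove_succ]
    have hEF := expand_first C (fun D => nambuV A D)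
    calc nambu (Fin.cons A C)
        = A * nambu C + ∑ i : Fin (m + 1),
            (-1 : ℤ) ^ ((i : ℕ) + 1) • (C i * nambu (Fin.cons A (C ∘ i.succAbove))) := by
          rw [nambu_succ, Fin.sum_univ_succ]
          simp only [Fin.val_zero, pow_zero, one_smul, Fin.cons_zero, e1, Fin.cons_succ,
            Fin.val_succ]
          congr 1
          exact Finset.sum_congr rfl fun i _ => by rw [e2 i]
      _ = A * nambu C - ∑ i : Fin (m + 1),
            (-1 : ℤ) ^ (i : ℕ) • (C i * ∑ e : Perm (Fin m), (Perm.sign e : ℤ) •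
              nambuV A (C ∘ i.succAbove ∘ ⇑e)) := by
          rw [sub_eq_add_neg, ← Finset.sum_neg_distrib]
          congr 1
          refine Finset.sum_congr rfl fun i _ => ?_
          rw [ih A (C ∘ i.succAbove), pow_succ, mul_smul, neg_one_zsmul, smul_neg]
          exact congrArg (fun x => -((-1 : ℤ) ^ (i : ℕ) • (C i * x)))
            (Finset.sum_congr rfl fun e _ => rfl)
      _ = ∑ τ : Perm (Fin (m + 1)), (Perm.sign τ : ℤ) • nambuV A (C ∘ ⇑τ) := by
          rw [← hEF]
          symm
          have hV : ∀ τ ∈ (Finset.univ : Finset (Perm (Fin (m + 1)))),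
              (Perm.sign τ : ℤ) • nambuV A (C ∘ ⇑τ)
              = (Perm.sign τ : ℤ) • (A * (ofFn (C ∘ ⇑τ)).prod)
                - (Perm.sign τ : ℤ) • (C (τ 0) * nambuV A (C ∘ ⇑τ ∘ Fin.succ)) := by
            intro τ _
            rw [← smul_sub]
            congr 1
            rw [nambuV_succ]
            rfl
          rw [Finset.sum_congr rfl hV, Finset.sum_sub_distrib]
          congr 1
          rw [nambu, Finset.mul_sum]
          exact Finset.sum_congr rfl fun τ _ => (mul_smul_comm _ _ _).symm

lemma snoc_comp_succAbove {n : ℕ} (C : Fin (n + 1) → R) (Z : R) (i : Fin (n + 1)) :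
    (Fin.snoc C Z) ∘ (Fin.castSucc i).succAbove = Fin.snoc (C ∘ i.succAbove) Z := by
  funext j
  induction j using Fin.lastCases with
  | last =>
    have h : (Fin.castSucc i).succAbove (Fin.last n) = Fin.last (n + 1) := by
      rw [Fin.succAbove_of_le_castSucc _ _ (by simp [Fin.le_last]), Fin.succ_last]
    simp [h]
  | cast l => simp [Fin.castSucc_succAbove_castSucc]

lemma nambu_snoc_eq : ∀ {n : ℕ} (Z : R) (C : Fin n → R),
    nambu (Fin.snoc C Z) = ∑ τ : Perm (Fin n), (Perm.sign τ : ℤ) • nambuU Z (C ∘ τ) := by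
  intro n
  induction n with
  | zero =>
    intro Z C
    rw [sum_perm_zero (fun τ : Perm (Fin 0) => (Perm.sign τ : ℤ) • nambuU Z (C ∘ τ)), nambu_one]
    simp [nambuU, Fin.snoc]
  | succ m ih =>
    intro Z C
    have e1 : (Fin.snoc C Z : Fin (m + 2) → R) ∘ Fin.castSucc = C := funext fun i => by simp
    have hEF := expand_first C (fun D => nambuU Z D)
    calc nambu (Fin.snoc C Z)
        = ∑ i : Fin (m + 1), (-1 : ℤ) ^ (i : ℕ) •
              (C i * nambu (Fin.snoc (C ∘ i.succAbove) Z)) +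
            (-1 : ℤ) ^ (m + 1) • (Z * nambu C) := by
          rw [nambu_succ, Fin.sum_univ_castSucc]
          simp only [Fin.coe_castSucc, Fin.snoc_castSucc, Fin.val_last, Fin.snoc_last,
            Fin.succAbove_last, e1]
          congr 1
          exact Finset.sum_congr rfl fun i _ => by rw [snoc_comp_succAbove]
      _ = ∑ i : Fin (m + 1), (-1 : ℤ) ^ (i : ℕ) •
              (C i * ∑ e : Perm (Fin m), (Perm.sign e : ℤ) • nambuU Z (C ∘ i.succAbove ∘ ⇑e)) +
            (-1 : ℤ) ^ (m + 1) • (Z * nambu C) := by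
          congr 1
          refine Finset.sum_congr rfl fun i _ => ?_
          rw [ih Z (C ∘ i.succAbove)]
          exact congrArg (fun x => (-1 : ℤ) ^ (i : ℕ) • (C i * x))
            (Finset.sum_congr rfl fun e _ => rfl)
      _ = ∑ τ : Perm (Fin (m + 1)), (Perm.sign τ : ℤ) • nambuU Z (C ∘ ⇑τ) := by
          rw [← hEF]
          symm
          have hU : ∀ τ ∈ (Finset.univ : Finset (Perm (Fin (m + 1)))),
              (Perm.sign τ : ℤ) • nambuU Z (C ∘ ⇑τ)
              = (Perm.sign τ : ℤ) • (C (τ 0) * nambuU Z (C ∘ ⇑τ ∘ Fin.succ))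
                + (-1 : ℤ) ^ (m + 1) • ((Perm.sign τ : ℤ) • (Z * (ofFn (C ∘ ⇑τ)).prod)) := by
            intro τ _
            rw [smul_comm ((-1 : ℤ) ^ (m + 1)), ← smul_add]
            congr 1
            rw [nambuU_succ, add_comm]
            rfl
          rw [Finset.sum_congr rfl hU, Finset.sum_add_distrib, ← Finset.smul_sum]
          congr 1
          rw [nambu, Finset.mul_sum]
          exact congrArg (fun x => (-1 : ℤ) ^ (m + 1) • x)
            (Finset.sum_congr rfl fun τ _ => (mul_smul_comm _ _ _).symm)

lemma main_lemma : ∀ {n : ℕ} (A Z : R) (C : Fin n → R),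
    nambu (Fin.cons A (Fin.snoc C Z)) = ∑ τ : Perm (Fin n), (Perm.sign τ : ℤ) • nambuT A Z (C ∘ τ) := by
  intro n
  induction n with
  | zero =>
    intro A Z C
    rw [sum_perm_zero (fun τ : Perm (Fin 0) => (Perm.sign τ : ℤ) • nambuT A Z (C ∘ τ))]
    rw [nambu_succ, Fin.sum_univ_two, nambu_one, nambu_one]
    have hv1 : (0 : Fin 2).succAbove 0 = 1 := by decide
    have hv2 : (1 : Fin 2).succAbove 0 = 0 := by decide
    have f1 : (Fin.cons A (Fin.snoc C Z) : Fin 2 → R) 1 = Z := by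
      rw [show (1 : Fin 2) = Fin.succ 0 from rfl, Fin.cons_succ]
      simp [Fin.snoc]
    simp only [Function.comp_apply, hv1, hv2, f1, Fin.cons_zero, Fin.val_zero, Fin.val_one,
      pow_zero, pow_one, one_smul, neg_one_zsmul, nambuT]
    norm_num [sub_eq_add_neg]
  | succ m ih =>
    intro A Z C
    have c0 : (Fin.cons A (Fin.snoc C Z) : Fin (m + 3) → R) ∘ (0 : Fin (m + 3)).succAbove
        = Fin.snoc C Z := by
      funext j; simp [Fin.zero_succAbove]
    have clast : (Fin.cons A (Fin.snoc C Z) : Fin (m + 3) → R) ∘ Fin.castSucc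
        = Fin.cons A C := by
      funext j
      induction j using Fin.cases with
      | zero => simp
      | succ l =>
        rw [Function.comp_apply, ← Fin.succ_castSucc, Fin.cons_succ, Fin.snoc_castSucc,
          Fin.cons_succ]
    have cmid : ∀ i : Fin (m + 1),
        (Fin.cons A (Fin.snoc C Z) : Fin (m + 3) → R) ∘ ((Fin.castSucc i).succ).succAbove
          = Fin.cons A (Fin.snoc (C ∘ i.succAbove) Z) := by
      intro i; funext j
      induction j using Fin.cases with
      | zero => simp [Fin.succ_succAbove_zero]
      | succ l =>
        rw [Function.comp_apply, Fin.succ_succAbove_succ, Fin.cons_succ, Fin.cons_succ,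
          ← snoc_comp_succAbove]
        rfl
    have hEF := expand_first C (fun D => nambuT A Z D)
    calc nambu (Fin.cons A (Fin.snoc C Z))
        = A * nambu (Fin.snoc C Z)
          + ∑ i : Fin (m + 1), (-1 : ℤ) ^ ((i : ℕ) + 1) •
              (C i * nambu (Fin.cons A (Fin.snoc (C ∘ i.succAbove) Z)))
          + (-1 : ℤ) ^ (m + 2) • (Z * nambu (Fin.cons A C)) := by
          rw [nambu_succ, Fin.sum_univ_succ, Fin.sum_univ_castSucc, ← add_assoc]
          have flast : (Fin.cons A (Fin.snoc C Z) : Fin (m + 3) → R) (Fin.last (m + 2)) = Z := by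
            rw [← Fin.succ_last, Fin.cons_succ, Fin.snoc_last]
          simp only [Fin.val_zero, pow_zero, one_smul, Fin.cons_zero, c0, Fin.val_succ,
            Fin.coe_castSucc, Fin.cons_succ, Fin.snoc_castSucc, Fin.val_last, Fin.succ_last,
            Fin.succAbove_last, clast, Fin.snoc_last, flast, Nat.succ_eq_add_one]
          congr 1
          congr 1
          exact Finset.sum_congr rfl fun i _ => by rw [cmid i]
      _ = A * nambu (Fin.snoc C Z)
          - ∑ i : Fin (m + 1), (-1 : ℤ) ^ (i : ℕ) •
              (C i * ∑ e : Perm (Fin m), (Perm.sign e : ℤ) • nambuT A Z (C ∘ i.succAbove ∘ ⇑e))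
          - (-1 : ℤ) ^ (m + 1) • (Z * nambu (Fin.cons A C)) := by
          rw [sub_eq_add_neg, sub_eq_add_neg, ← Finset.sum_neg_distrib]
          congr 1
          · congr 1
            refine Finset.sum_congr rfl fun i _ => ?_
            rw [ih A Z (C ∘ i.succAbove), pow_succ, mul_smul, neg_one_zsmul, smul_neg]
            exact congrArg (fun x => -((-1 : ℤ) ^ (i : ℕ) • (C i * x)))
              (Finset.sum_congr rfl fun e _ => rfl)
          · rw [pow_succ, mul_smul, neg_one_zsmul, smul_neg]
      _ = ∑ τ : Perm (Fin (m + 1)), (Perm.sign τ : ℤ) • nambuT A Z (C ∘ ⇑τ) := by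
          rw [← hEF]
          symm
          have hT : ∀ τ ∈ (Finset.univ : Finset (Perm (Fin (m + 1)))),
              (Perm.sign τ : ℤ) • nambuT A Z (C ∘ ⇑τ)
              = (Perm.sign τ : ℤ) • (A * nambuU Z (C ∘ ⇑τ))
                - (-1 : ℤ) ^ (m + 1) • ((Perm.sign τ : ℤ) • (Z * nambuV A (C ∘ ⇑τ)))
                - (Perm.sign τ : ℤ) • (C (τ 0) * nambuT A Z (C ∘ ⇑τ ∘ Fin.succ)) := by
            intro τ _
            rw [smul_comm ((-1 : ℤ) ^ (m + 1)), ← smul_sub, ← smul_sub]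
            congr 1
            rw [nambuT_succ]
            rfl
          rw [Finset.sum_congr rfl hT, Finset.sum_sub_distrib, Finset.sum_sub_distrib,
            ← Finset.smul_sum]
          rw [sub_right_comm]
          congr 1
          congr 1
          · rw [nambu_snoc_eq, Finset.mul_sum]
            exact Finset.sum_congr rfl fun τ _ => (mul_smul_comm _ _ _).symm
          · rw [nambu_cons_eq, Finset.mul_sum]
            exact congrArg (fun x => (-1 : ℤ) ^ (m + 1) • x)
              (Finset.sum_congr rfl fun τ _ => (mul_smul_comm _ _ _).symm)

end NambuAux

/-- Lemma 2: antisymmetrized `[A B₁ ⋯ B_J Z]` resolved into ordered words. -/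
theorem lemma_two {R : Type*} [Ring R] {J : ℕ} (A Z : R) (B : Fin J → R) :
    ∑ τ : Equiv.Perm (Fin J), (Equiv.Perm.sign τ : ℤ) •
        nambu (Fin.cons A (Fin.snoc (B ∘ τ) Z)) =
      (J.factorial : ℤ) • ∑ τ : Equiv.Perm (Fin J), (Equiv.Perm.sign τ : ℤ) •
        ∑ j ∈ Finset.range (J + 1), ∑ k ∈ Finset.range (J - j + 1),
          ((-1 : ℤ) ^ (j + k)) •
            ((((List.ofFn (B ∘ τ)).take k).prod * A *
                (((List.ofFn (B ∘ τ)).take (J - j)).drop k).prod * Z *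
                ((List.ofFn (B ∘ τ)).drop (J - j)).prod) -
             (((List.ofFn (B ∘ τ)).take k).prod * Z *
                (((List.ofFn (B ∘ τ)).take (J - j)).drop k).prod * A *
                ((List.ofFn (B ∘ τ)).drop (J - j)).prod)) := by
  open Equiv Finset in
  calc ∑ τ : Perm (Fin J), (Perm.sign τ : ℤ) • nambu (Fin.cons A (Fin.snoc (B ∘ τ) Z))
      = ∑ τ : Perm (Fin J), ∑ e : Perm (Fin J),
          (Perm.sign (τ * e) : ℤ) • nambuT A Z (B ∘ ⇑(τ * e)) := by
        refine Finset.sum_congr rfl fun τ _ => ?_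
        rw [main_lemma A Z (B ∘ ⇑τ), Finset.smul_sum]
        refine Finset.sum_congr rfl fun e _ => ?_
        rw [smul_smul]
        have hs : ((Perm.sign τ : ℤ) * (Perm.sign e : ℤ)) = (Perm.sign (τ * e) : ℤ) := by
          rw [Equiv.Perm.sign_mul, Units.val_mul]
        rw [hs]
        rfl
    _ = ∑ τ : Perm (Fin J), ∑ ρ : Perm (Fin J), (Perm.sign ρ : ℤ) • nambuT A Z (B ∘ ⇑ρ) := by
        refine Finset.sum_congr rfl fun τ _ => ?_
        exact Equiv.sum_comp (Equiv.mulLeft τ) (fun ρ => (Perm.sign ρ : ℤ) • nambuT A Z (B ∘ ⇑ρ))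
    _ = (J.factorial : ℤ) • ∑ ρ : Perm (Fin J), (Perm.sign ρ : ℤ) • nambuT A Z (B ∘ ⇑ρ) := by
        rw [Finset.sum_const, Finset.card_univ, Fintype.card_perm, Fintype.card_fin,
          natCast_zsmul]
    _ = _ := by
        exact congrArg (fun x => (J.factorial : ℤ) • x)
          (Finset.sum_congr rfl fun τ _ => rfl)
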